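/- arXiv:math/0110248 — 2 statements merged into one kernel-verified Lean document; each statement's English description precedes it below -/
import Mathlib

section
/- Let D be a d-dimensional vector space over a finite field with Q elements, with a partial flag D_0 = 0 ⊂ D_1 ⊂ ⋯ ⊂ D_k = D with dim(D_i/D_{i−1}) = d_i. Given a = (a_1,…,a_k) with 0 ≤ a_i ≤ d_i, the number of subspaces W ⊆ D with dim(W ∩ D_i)/(W ∩ D_{i−1}) = a_i for all i equals ∑_{b ∈ C_a} Q^{∑_{1≤j<i≤d} b_i(1−b_j)}, where C_a is the set of 0-1 vectors b of length d whose sum over positions d_1+⋯+d_{j−1}+1 through d_1+⋯+d_j equals a_j. -/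
open Finset Module

namespace Stmt11

def g (Q : ℕ) : ℕ → ℕ → ℕ
  | 0, 0 => 1
  | 0, _+1 => 0
  | c+1, 0 => g Q c 0
  | c+1, m+1 => Q^(m+1) * g Q c (m+1) + g Q c m

def ones {n : ℕ} (b : Fin n → Bool) : ℕ := ∑ s, (if b s then 1 else 0)

def stat {n : ℕ} (b : Fin n → Bool) : ℕ :=
  ∑ s : Fin n, ∑ t : Fin n, (if ((t : ℕ) < (s : ℕ)) then (if b s then 1 else 0) * (if b t then 0 else 1) else 0)

lemma ones_card {n : ℕ} (b : Fin n → Bool) :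
    (Finset.univ.filter (fun s => b s = true)).card = ones b := by
  unfold ones; rw [Finset.card_filter]

lemma ones_cons {n : ℕ} (x : Bool) (b' : Fin n → Bool) :
    ones (Fin.cons x b') = (if x then 1 else 0) + ones b' := by
  unfold ones; rw [Fin.sum_univ_succ, Fin.cons_zero]; simp [Fin.cons_succ]

lemma stat_cons {n : ℕ} (x : Bool) (b' : Fin n → Bool) :
    stat (Fin.cons x b') = (if x then 0 else ones b') + stat b' := by
  unfold stat
  simp only [Fin.sum_univ_succ, Fin.cons_zero, Fin.cons_succ, Fin.val_zero, Fin.val_succ]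
  cases x <;>
    simp [ones, Finset.sum_add_distrib, Nat.add_lt_add_iff_right, Nat.lt_irrefl, mul_comm]

lemma sum_cons {n : ℕ} (f : (Fin (n+1) → Bool) → ℕ) :
    ∑ b : Fin (n+1) → Bool, f b = ∑ x : Bool, ∑ y : Fin n → Bool, f (Fin.cons x y) := by
  rw [← Equiv.sum_comp (Fin.consEquiv (fun _ : Fin (n+1) => Bool)) f, Fintype.sum_prod_type]
  rfl

lemma gsum (Q : ℕ) : ∀ n m : ℕ,
    (∑ b ∈ Finset.univ.filter (fun b : Fin n → Bool => ones b = m), Q ^ stat b) = g Q n m := by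
  intro n
  induction n with
  | zero =>
    intro m
    cases m with
    | zero => simp [g, ones, stat]
    | succ m => simp [g, ones, stat]
  | succ n ih =>
    intro m
    rw [Finset.sum_filter]
    rw [sum_cons (fun b => if ones b = m then Q ^ stat b else 0)]
    have key : ∀ x : Bool, ∑ y : Fin n → Bool,
        (if ones (Fin.cons x y) = m then Q ^ stat (Fin.cons x y) else 0)
        = if x then (match m with | 0 => 0 | m'+1 => g Q n m') else Q ^ m * g Q n m := by
      intro x
      cases x with
      | true =>
        simp only [ones_cons, stat_cons, reduceIte]
        cases m with
        | zero => apply Finset.sum_eq_zero; intro b' _; rw [if_neg]; omega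
        | succ m' =>
          show _ = g Q n m'
          rw [← ih m', Finset.sum_filter]
          apply Finset.sum_congr rfl
          intro b' _
          by_cases h : ones b' = m'
          · rw [if_pos (by omega), if_pos h, Nat.zero_add]
          · rw [if_neg (by omega), if_neg h]
      | false =>
        simp only [ones_cons, stat_cons, Bool.false_eq_true, if_false, Nat.zero_add]
        rw [← ih m, Finset.sum_filter, Finset.mul_sum]
        apply Finset.sum_congr rfl
        intro b' _
        by_cases h : ones b' = m
        · rw [if_pos (by omega), if_pos h, h, pow_add]
        · rw [if_neg (by omega), if_neg h, mul_zero]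
    rw [Fintype.sum_bool, key true, key false]
    cases m with
    | zero => simp [g]
    | succ m' => simp [g, Nat.add_comm]


def zeros {n : ℕ} (b : Fin n → Bool) : ℕ := ∑ t, (if b t then 0 else 1)

lemma ones_add_zeros {n : ℕ} (b : Fin n → Bool) : ones b + zeros b = n := by
  rw [ones, zeros, ← Finset.sum_add_distrib]
  have : ∀ s : Fin n, ((if b s then 1 else 0) + (if b s then 0 else 1)) = 1 := by
    intro s; by_cases h : b s <;> simp [h]
  rw [Finset.sum_congr rfl (fun s _ => this s)]
  simp

lemma rhs_eq (Q k : ℕ) (dvec a : Fin k → ℕ) :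
    (∑ b ∈ Finset.univ.filter (fun b : ∀ i : Fin k, Fin (dvec i) → Bool =>
          ∀ i, (Finset.univ.filter (fun s => b i s = true)).card = a i),
        Q ^ (∑ i : Fin k, ∑ s : Fin (dvec i), ∑ j : Fin k, ∑ t : Fin (dvec j),
          if ((j : ℕ) < (i : ℕ) ∨ ((j : ℕ) = (i : ℕ) ∧ (t : ℕ) < (s : ℕ))) then
            (if b i s then 1 else 0) * (if b j t then 0 else 1) else 0))
      = Q ^ (∑ i, a i * ∑ j ∈ Finset.univ.filter (fun j : Fin k => (j:ℕ) < (i:ℕ)), (dvec j - a j))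
        * ∏ i, g Q (dvec i) (a i) := by
  have hfilt : (Finset.univ.filter (fun b : ∀ i : Fin k, Fin (dvec i) → Bool =>
      ∀ i, (Finset.univ.filter (fun s => b i s = true)).card = a i))
      = Finset.univ.filter (fun b => ∀ i, ones (b i) = a i) := by
    apply Finset.filter_congr; intro b _
    constructor
    · intro h i; rw [← ones_card]; exact h i
    · intro h i; rw [ones_card]; exact h i
  rw [hfilt]
  have main : ∀ b ∈ Finset.univ.filter
      (fun b : ∀ i : Fin k, Fin (dvec i) → Bool => ∀ i, ones (b i) = a i),
      Q ^ (∑ i : Fin k, ∑ s : Fin (dvec i), ∑ j : Fin k, ∑ t : Fin (dvec j),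
          if ((j : ℕ) < (i : ℕ) ∨ ((j : ℕ) = (i : ℕ) ∧ (t : ℕ) < (s : ℕ))) then
            (if b i s then 1 else 0) * (if b j t then 0 else 1) else 0)
        = Q ^ (∑ i, a i * ∑ j ∈ Finset.univ.filter (fun j : Fin k => (j:ℕ) < (i:ℕ)), (dvec j - a j))
          * ∏ i, Q ^ stat (b i) := by
    intro b hbmem
    rw [Finset.mem_filter] at hbmem
    have hb := hbmem.2
    have expE : (∑ i : Fin k, ∑ s : Fin (dvec i), ∑ j : Fin k, ∑ t : Fin (dvec j),
          if ((j : ℕ) < (i : ℕ) ∨ ((j : ℕ) = (i : ℕ) ∧ (t : ℕ) < (s : ℕ))) then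
            (if b i s then 1 else 0) * (if b j t then 0 else 1) else 0)
        = (∑ i, a i * ∑ j ∈ Finset.univ.filter (fun j : Fin k => (j:ℕ) < (i:ℕ)), (dvec j - a j))
          + ∑ i, stat (b i) := by
      rw [← Finset.sum_add_distrib]
      apply Finset.sum_congr rfl
      intro i _
      rw [Finset.sum_comm]
      have hterm : ∀ j : Fin k, (∑ s : Fin (dvec i), ∑ t : Fin (dvec j),
          if ((j : ℕ) < (i : ℕ) ∨ ((j : ℕ) = (i : ℕ) ∧ (t : ℕ) < (s : ℕ))) then
            (if b i s then 1 else 0) * (if b j t then 0 else 1) else 0)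
          = (if (j:ℕ) < (i:ℕ) then a i * (dvec j - a j) else 0)
            + (if j = i then stat (b i) else 0) := by
        intro j
        rcases lt_trichotomy ((j:ℕ)) ((i:ℕ)) with h | h | h
        · rw [if_pos h, if_neg (fun e => by subst e; exact lt_irrefl _ h), Nat.add_zero]
          have step : (∑ s : Fin (dvec i), ∑ t : Fin (dvec j),
              if ((j : ℕ) < (i : ℕ) ∨ ((j : ℕ) = (i : ℕ) ∧ (t : ℕ) < (s : ℕ))) then
                (if b i s then 1 else 0) * (if b j t then 0 else 1) else 0)
              = ∑ s : Fin (dvec i), ∑ t : Fin (dvec j),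
                (if b i s then 1 else 0) * (if b j t then 0 else 1) :=
            Finset.sum_congr rfl fun s _ => Finset.sum_congr rfl fun t _ => if_pos (Or.inl h)
          rw [step, ← Finset.sum_mul_sum]
          have h1 : (∑ s : Fin (dvec i), if b i s then 1 else 0) = a i := hb i
          have h2 : (∑ t : Fin (dvec j), if b j t then 0 else 1) = dvec j - a j := by
            have h3 := ones_add_zeros (b j)
            have h4 : ones (b j) = a j := hb j
            have h5 : zeros (b j) = dvec j - a j := by omega
            exact h5
          rw [h1, h2]
        · have hji : j = i := Fin.ext h
          subst hji
          rw [if_neg (lt_irrefl _), if_pos rfl, Nat.zero_add]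
          unfold stat
          apply Finset.sum_congr rfl; intro s _
          apply Finset.sum_congr rfl; intro t _
          apply if_congr _ rfl rfl
          simp
        · rw [if_neg (by omega), if_neg (fun e => by subst e; exact lt_irrefl _ h), Nat.add_zero]
          apply Finset.sum_eq_zero; intro s _
          apply Finset.sum_eq_zero; intro t _
          apply if_neg
          rintro (h' | ⟨h', _⟩) <;> omega
      rw [Finset.sum_congr rfl (fun j _ => hterm j), Finset.sum_add_distrib]
      congr 1
      · rw [← Finset.sum_filter, ← Finset.mul_sum]
      · rw [Finset.sum_ite_eq' Finset.univ i (fun _ => stat (b i)), if_pos (Finset.mem_univ i)]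
    rw [expE, pow_add]
    congr 1
    exact (Finset.prod_pow_eq_pow_sum _ _ _).symm
  rw [Finset.sum_congr rfl main, ← Finset.mul_sum]
  congr 1
  have hfilt2 : (Finset.univ.filter
      (fun b : ∀ i : Fin k, Fin (dvec i) → Bool => ∀ i, ones (b i) = a i))
      = Fintype.piFinset (fun i => Finset.univ.filter (fun β : Fin (dvec i) → Bool => ones β = a i)) := by
    ext b; simp [Fintype.mem_piFinset]
  rw [hfilt2]
  rw [show (∏ i : Fin k, g Q (dvec i) (a i)) = ∏ i : Fin k,
      ∑ β ∈ Finset.univ.filter (fun β : Fin (dvec i) → Bool => ones β = a i), Q ^ stat β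
    from Finset.prod_congr rfl (fun i _ => (gsum Q (dvec i) (a i)).symm)]
  rw [Finset.prod_univ_sum]



variable {F : Type*} [Field F] [Fintype F] {D : Type*} [AddCommGroup D] [Module F D]
  [FiniteDimensional F D]

lemma finD (F : Type*) [Field F] [Fintype F] (D : Type*) [AddCommGroup D] [Module F D]
    [FiniteDimensional F D] : Finite D := Module.finite_of_finite F

lemma finSub (F : Type*) [Field F] [Fintype F] (D : Type*) [AddCommGroup D] [Module F D]
    [FiniteDimensional F D] : Finite (Submodule F D) := by
  have := finD F D
  exact Finite.of_injective (fun W : Submodule F D => (W : Set D)) SetLike.coe_injective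

/-- rank of sup with a span of a vector outside -/
lemma finrank_sup_span {K : Submodule F D} {v : D} (hv : v ∉ K) :
    finrank F ↥(K ⊔ Submodule.span F {v}) = finrank F ↥K + 1 := by
  have hvne : v ≠ 0 := fun h => hv (h ▸ K.zero_mem)
  have hinf : K ⊓ Submodule.span F {v} = ⊥ := by
    apply eq_bot_iff.2
    intro z hz
    obtain ⟨hz1, hz2⟩ := Submodule.mem_inf.1 hz
    rw [Submodule.mem_span_singleton] at hz2
    obtain ⟨c, rfl⟩ := hz2
    rcases eq_or_ne c 0 with rfl | hc
    · simp
    · exact absurd (by simpa [smul_smul, inv_mul_cancel₀ hc] using K.smul_mem c⁻¹ hz1) hv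
  have := Submodule.finrank_sup_add_finrank_inf_eq K (Submodule.span F {v})
  rw [hinf, finrank_span_singleton hvne] at this
  simpa using this

lemma card_ext1 (H₁ H W' : Submodule F D) (δ : ℕ) (hHH₁ : H ≤ H₁) (hW' : W' ≤ H)
    (hr1 : finrank F H₁ = finrank F H + 1) (hδ : finrank F H = finrank F W' + δ) :
    Nat.card {W₁ : Submodule F D // W₁ ≤ H₁ ∧ W₁ ⊓ H = W' ∧
      finrank F W₁ = finrank F W' + 1} = Fintype.card F ^ δ := by
  -- pick x ∈ H₁ \ H
  obtain ⟨x, hxH₁, hxH⟩ : ∃ x ∈ H₁, x ∉ H := by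
    rw [← SetLike.not_le_iff_exists]
    intro hle
    have := Submodule.finrank_mono (M := D) (R := F) hle
    omega
  -- complement C of W' in H
  obtain ⟨C', hC'⟩ := Submodule.exists_isCompl (Submodule.comap H.subtype W')
  set C : Submodule F D := Submodule.map H.subtype C' with hCdef
  have hCH : C ≤ H := by
    rintro z ⟨c, _, rfl⟩; exact c.2
  have hCW : ∀ z ∈ C, z ∈ W' → z = 0 := by
    rintro z ⟨c, hc, rfl⟩ hzW
    have : c ∈ Submodule.comap H.subtype W' ⊓ C' := ⟨hzW, hc⟩
    rw [hC'.inf_eq_bot, Submodule.mem_bot] at this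
    simp [this]
  have hsum : ∀ h ∈ H, ∃ w ∈ W', ∃ c ∈ C, h = w + c := by
    intro h hh
    have : (⟨h, hh⟩ : ↥H) ∈ Submodule.comap H.subtype W' ⊔ C' := by
      rw [hC'.sup_eq_top]; trivial
    obtain ⟨w, hw, c, hc, hwc⟩ := Submodule.mem_sup.1 this
    exact ⟨w.1, hw, c.1, ⟨c, hc, rfl⟩, by simpa [eq_comm] using congrArg Subtype.val hwc⟩
  have hrkC : finrank F ↥C = δ := by
    have h1 := Submodule.finrank_add_eq_of_isCompl hC'
    have h2 : finrank F ↥(Submodule.comap H.subtype W') = finrank F ↥W' :=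
      (Submodule.comapSubtypeEquivOfLe hW').finrank_eq
    have h3 : finrank F ↥C = finrank F ↥C' := Submodule.finrank_map_subtype_eq H C'
    have h4 : finrank F ↥(⊤ : Submodule F ↥H) = finrank F ↥H := finrank_top F ↥H
    omega
  -- the parametrization
  have hxc_notH : ∀ c ∈ H, x + c ∉ H := by
    intro c hc hmem
    exact hxH (by simpa using H.sub_mem hmem hc)
  have key : ∀ c ∈ H, (W' ⊔ Submodule.span F {x + c}) ≤ H₁ ∧
      (W' ⊔ Submodule.span F {x + c}) ⊓ H = W' ∧
      finrank F ↥(W' ⊔ Submodule.span F {x + c}) = finrank F ↥W' + 1 := by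
    intro c hc
    have hxc : x + c ∉ W' := fun h => hxc_notH c hc (hW' h)
    have hxcH : x + c ∉ H := hxc_notH c hc
    refine ⟨?_, ?_, ?_⟩
    · apply sup_le (hW'.trans hHH₁)
      rw [Submodule.span_le, Set.singleton_subset_iff]
      exact H₁.add_mem hxH₁ (hHH₁ hc)
    · apply le_antisymm
      · rintro z ⟨hz1, hz2⟩
        obtain ⟨w, hw, y, hy, rfl⟩ := Submodule.mem_sup.1 hz1
        rw [Submodule.mem_span_singleton] at hy
        obtain ⟨e, rfl⟩ := hy
        rcases eq_or_ne e 0 with rfl | he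
        · simpa using hw
        · exfalso
          apply hxcH
          have : e • (x + c) ∈ H := by
            have := H.sub_mem hz2 (hW' hw)
            simpa using this
          simpa [smul_smul, inv_mul_cancel₀ he] using H.smul_mem e⁻¹ this
      · exact le_inf le_sup_left hW'
    · exact finrank_sup_span hxc
  let f : ↥C → {W₁ : Submodule F D // W₁ ≤ H₁ ∧ W₁ ⊓ H = W' ∧
      finrank F W₁ = finrank F W' + 1} :=
    fun c => ⟨W' ⊔ Submodule.span F {x + c.1}, key c.1 (hCH c.2)⟩
  have hinj : Function.Injective f := by
    rintro ⟨c₁, hc₁⟩ ⟨c₂, hc₂⟩ hf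
    have hf' : (W' ⊔ Submodule.span F {x + c₁}) = (W' ⊔ Submodule.span F {x + c₂}) :=
      congrArg Subtype.val hf
    have h1 : x + c₁ ∈ W' ⊔ Submodule.span F {x + c₂} := by
      rw [← hf']
      exact Submodule.mem_sup_right (Submodule.mem_span_singleton_self _)
    have h2 : x + c₂ ∈ W' ⊔ Submodule.span F {x + c₂} :=
      Submodule.mem_sup_right (Submodule.mem_span_singleton_self _)
    have hdiff : c₁ - c₂ ∈ (W' ⊔ Submodule.span F {x + c₂}) ⊓ H := by
      constructor
      · have := Submodule.sub_mem _ h1 h2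
        simpa using this
      · exact H.sub_mem (hCH hc₁) (hCH hc₂)
    rw [(key c₂ (hCH hc₂)).2.1] at hdiff
    have : c₁ - c₂ = 0 := hCW _ (C.sub_mem hc₁ hc₂) hdiff
    ext
    exact sub_eq_zero.1 this
  have hsurj : Function.Surjective f := by
    rintro ⟨W₁, hW₁le, hW₁inf, hW₁rk⟩
    have hW'W₁ : W' ≤ W₁ := hW₁inf ▸ inf_le_left
    have hlt : W' < W₁ := lt_of_le_of_ne hW'W₁ (fun h => by rw [← h] at hW₁rk; omega)
    obtain ⟨y, hyW₁, hyW'⟩ := SetLike.exists_of_lt hlt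
    have hyH : y ∉ H := fun h => hyW' (hW₁inf ▸ (⟨hyW₁, h⟩ : y ∈ W₁ ⊓ H))
    -- H₁ = H ⊔ span x
    have hHx : H ⊔ Submodule.span F {x} = H₁ := by
      apply Submodule.eq_of_le_of_finrank_eq
      · apply sup_le hHH₁
        rw [Submodule.span_le, Set.singleton_subset_iff]; exact hxH₁
      · rw [finrank_sup_span hxH, hr1]
    have hy' : y ∈ H ⊔ Submodule.span F {x} := hHx ▸ hW₁le hyW₁
    obtain ⟨h, hh, z, hz, hsum'⟩ := Submodule.mem_sup.1 hy'
    rw [Submodule.mem_span_singleton] at hz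
    obtain ⟨e, rfl⟩ := hz
    have he : e ≠ 0 := by
      rintro rfl; apply hyH; rw [← hsum']; simpa using hh
    -- x + e⁻¹ • h ∈ W₁
    have hyx : x + e⁻¹ • h ∈ W₁ := by
      have : e⁻¹ • y ∈ W₁ := W₁.smul_mem _ hyW₁
      rw [← hsum'] at this
      have heq : e⁻¹ • (h + e • x) = x + e⁻¹ • h := by
        rw [smul_add, smul_smul, inv_mul_cancel₀ he, one_smul, add_comm]
      rwa [heq] at this
    obtain ⟨w, hw, c, hc, hwc⟩ := hsum (e⁻¹ • h) (H.smul_mem _ hh)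
    refine ⟨⟨c, hc⟩, ?_⟩
    apply Subtype.ext
    show W' ⊔ Submodule.span F {x + c} = W₁
    apply Submodule.eq_of_le_of_finrank_eq
    · apply sup_le hW'W₁
      rw [Submodule.span_le, Set.singleton_subset_iff]
      have : x + c = (x + e⁻¹ • h) - w := by rw [hwc]; abel
      rw [this]
      exact W₁.sub_mem hyx (hW'W₁ hw)
    · rw [(key c (hCH hc)).2.2, hW₁rk]
  have := finD F D
  have := finSub F D
  rw [← Nat.card_congr (Equiv.ofBijective f ⟨hinj, hsurj⟩)]
  have : Nat.card ↥C = Fintype.card F ^ finrank F ↥C := by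
    have : Fintype ↥C := Fintype.ofFinite _
    rw [Nat.card_eq_fintype_card, card_eq_pow_finrank (K := F) (V := ↥C)]
  rw [this, hrkC]


lemma lemF (Q : ℕ) (hQ : Fintype.card F = Q) (c : ℕ) :
    ∀ (H E W' : Submodule F D) (m δ : ℕ), H ≤ E → W' ≤ H →
    finrank F E = finrank F H + c → finrank F H = finrank F W' + δ →
    Nat.card {W : Submodule F D // W ≤ E ∧ W ⊓ H = W' ∧
        finrank F W = finrank F W' + m}
      = Q ^ (m * δ) * g Q c m := by
  induction c with
  | zero =>
    intro H E W' m δ hHE hW'H hc hδ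
    have hHeq : H = E := Submodule.eq_of_le_of_finrank_eq hHE (by omega)
    subst hHeq
    have hWeq : ∀ W : Submodule F D, W ≤ H → W ⊓ H = W' → W = W' := by
      intro W hle hinf
      rw [← hinf, inf_eq_left.2 hle]
    cases m with
    | zero =>
      have hrhs : Q ^ (0 * δ) * g Q 0 0 = 1 := by simp [g]
      rw [hrhs, Nat.card_eq_one_iff_unique]
      constructor
      · constructor
        intro s t
        apply Subtype.ext
        rw [hWeq s.1 s.2.1 s.2.2.1, hWeq t.1 t.2.1 t.2.2.1]
      · exact ⟨⟨W', hW'H, inf_eq_left.2 hW'H, by omega⟩⟩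
    | succ m' =>
      have : IsEmpty {W : Submodule F D // W ≤ H ∧ W ⊓ H = W' ∧
          finrank F W = finrank F W' + (m' + 1)} := by
        constructor
        rintro ⟨W, hle, hinf, hrk⟩
        rw [hWeq W hle hinf] at hrk
        omega
      rw [Nat.card_of_isEmpty]
      simp [g]
  | succ c ih =>
    intro H E W' m δ hHE hW'H hc hδ
    classical
    set B : ℕ := (match m with | 0 => (0:ℕ) | m'+1 => Q ^ (m' * δ) * g Q c m') with hB
    have hfinD := finD F D
    have hfinSub := finSub F D
    have instSub : Fintype (Submodule F D) := Fintype.ofFinite _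
    -- pick x ∈ E \ H and set H₁
    obtain ⟨x, hxE, hxH⟩ : ∃ x ∈ E, x ∉ H := by
      rw [← SetLike.not_le_iff_exists]
      intro hle
      have := Submodule.finrank_mono (M := D) (R := F) hle
      omega
    set H₁ : Submodule F D := H ⊔ Submodule.span F {x} with hH₁def
    have hHH₁ : H ≤ H₁ := le_sup_left
    have hH₁E : H₁ ≤ E := by
      apply sup_le hHE
      rw [Submodule.span_le, Set.singleton_subset_iff]; exact hxE
    have hr1 : finrank F H₁ = finrank F H + 1 := finrank_sup_span hxH
    -- predicates
    set P : Submodule F D → Prop := fun W => W ≤ E ∧ W ⊓ H = W' ∧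
        finrank F W = finrank F W' + m
    set Xp : Submodule F D → Prop := fun W₁ => W₁ ≤ H₁ ∧ W₁ ⊓ H = W' ∧
        finrank F W₁ = finrank F W' + 1
    -- sigma decomposition
    have hsigma : Nat.card {W : Submodule F D // P W}
        = ∑ W₁ : Submodule F D, Nat.card {W : Submodule F D // P W ∧ W ⊓ H₁ = W₁} := by
      have e1 : {W : Submodule F D // P W}
          ≃ Σ W₁ : Submodule F D, {W : Submodule F D // P W ∧ W ⊓ H₁ = W₁} :=
        (Equiv.sigmaFiberEquiv (fun W : {W : Submodule F D // P W} => W.1 ⊓ H₁)).symm.trans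
          (Equiv.sigmaCongrRight (fun W₁ =>
            (Equiv.subtypeSubtypeEquivSubtypeInter P (fun W => W ⊓ H₁ = W₁))))
      rw [Nat.card_congr e1, Nat.card_eq_fintype_card, Fintype.card_sigma]
      exact Finset.sum_congr rfl (fun W₁ _ => (Nat.card_eq_fintype_card).symm)
    -- value of each fiber
    have hval : ∀ W₁ : Submodule F D, Nat.card {W : Submodule F D // P W ∧ W ⊓ H₁ = W₁}
        = if W₁ = W' then Q ^ (m * (δ + 1)) * g Q c m
          else if Xp W₁ then B else 0 := by
      intro W₁
      by_cases h1 : W₁ = W'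
      · subst h1
        rw [if_pos rfl]
        have e2 : {W : Submodule F D // P W ∧ W ⊓ H₁ = W₁}
            ≃ {W : Submodule F D // W ≤ E ∧ W ⊓ H₁ = W₁ ∧
                finrank F W = finrank F W₁ + m} := by
          apply Equiv.subtypeEquivRight
          intro W
          constructor
          · rintro ⟨⟨hle, _, hrk⟩, hinf1⟩
            exact ⟨hle, hinf1, hrk⟩
          · rintro ⟨hle, hinf1, hrk⟩
            have : W ⊓ H = W₁ := by
              rw [← inf_of_le_left hW'H, show W₁ ⊓ H = W ⊓ H₁ ⊓ H from by rw [hinf1],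
                inf_assoc, inf_of_le_right hHH₁]
            exact ⟨⟨hle, this, hrk⟩, hinf1⟩
        rw [Nat.card_congr e2]
        exact ih H₁ E W₁ m (δ + 1) hH₁E (hW'H.trans hHH₁) (by omega) (by omega)
      · rw [if_neg h1]
        by_cases h2 : Xp W₁
        · rw [if_pos h2]
          obtain ⟨hX1, hX2, hX3⟩ := h2
          cases m with
          | zero =>
            have : IsEmpty {W : Submodule F D // P W ∧ W ⊓ H₁ = W₁} := by
              constructor
              rintro ⟨W, ⟨hle, hinf, hrk⟩, hinf1⟩
              have hW₁W : W₁ ≤ W := hinf1 ▸ inf_le_left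
              have := Submodule.finrank_mono (M := D) (R := F) hW₁W
              omega
            rw [Nat.card_of_isEmpty, hB]
          | succ m' =>
            have e2 : {W : Submodule F D // P W ∧ W ⊓ H₁ = W₁}
                ≃ {W : Submodule F D // W ≤ E ∧ W ⊓ H₁ = W₁ ∧
                    finrank F W = finrank F W₁ + m'} := by
              apply Equiv.subtypeEquivRight
              intro W
              constructor
              · rintro ⟨⟨hle, _, hrk⟩, hinf1⟩
                exact ⟨hle, hinf1, by omega⟩
              · rintro ⟨hle, hinf1, hrk⟩
                have hWH : W ⊓ H = W' := by
                  rw [← hX2, show W₁ ⊓ H = W ⊓ H₁ ⊓ H from by rw [hinf1],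
                    inf_assoc, inf_of_le_right hHH₁]
                exact ⟨⟨hle, hWH, by omega⟩, hinf1⟩
            rw [Nat.card_congr e2, hB]
            exact ih H₁ E W₁ m' δ hH₁E hX1 (by omega) (by omega)
        · rw [if_neg h2]
          have : IsEmpty {W : Submodule F D // P W ∧ W ⊓ H₁ = W₁} := by
            constructor
            rintro ⟨W, ⟨hle, hinf, hrk⟩, hinf1⟩
            apply h2
            have hle1 : W₁ ≤ H₁ := hinf1 ▸ inf_le_right
            have hinfH : W₁ ⊓ H = W' := by
              rw [← hinf1, inf_assoc, inf_of_le_right hHH₁, hinf]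
            have hlow : W' ≤ W₁ := hinfH ▸ inf_le_left
            have hlowrk := Submodule.finrank_mono (M := D) (R := F) hlow
            have hup : finrank F W₁ ≤ finrank F W' + 1 := by
              have hsup := Submodule.finrank_sup_add_finrank_inf_eq W₁ H
              rw [hinfH] at hsup
              have hsuple : W₁ ⊔ H ≤ H₁ := sup_le hle1 hHH₁
              have := Submodule.finrank_mono (M := D) (R := F) hsuple
              omega
            have : finrank F W₁ = finrank F W' + 1 := by
              rcases Nat.lt_or_ge (finrank F W₁) (finrank F W' + 1) with hlt | hge
              · exfalso
                apply h1
                exact (Submodule.eq_of_le_of_finrank_eq hlow (by omega)).symm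
              · omega
            exact ⟨hle1, hinfH, this⟩
          rw [Nat.card_of_isEmpty]
    rw [hsigma, Finset.sum_congr rfl (fun W₁ _ => hval W₁)]
    -- split off W'
    rw [← Finset.add_sum_erase Finset.univ _ (Finset.mem_univ W')]
    rw [if_pos rfl]
    have hrest : ∑ W₁ ∈ Finset.univ.erase W',
        (if W₁ = W' then Q ^ (m * (δ + 1)) * g Q c m
          else if Xp W₁ then B else 0)
        = Q ^ δ * B := by
      rw [Finset.sum_congr rfl (fun W₁ hW₁ =>
        if_neg (Finset.mem_erase.1 hW₁).1)]
      have hne : ∀ W₁, Xp W₁ → W₁ ≠ W' := by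
        rintro W₁ ⟨_, _, h3⟩ rfl; omega
      rw [← Finset.sum_filter]
      have hfe : (Finset.univ.erase W').filter Xp = Finset.univ.filter Xp := by
        ext W₁
        simp only [Finset.mem_filter, Finset.mem_erase, Finset.mem_univ, true_and, and_true]
        exact ⟨fun h => h.2, fun h => ⟨hne W₁ h, h⟩⟩
      rw [hfe, Finset.sum_const]
      have hcardX : (Finset.univ.filter Xp).card = Q ^ δ := by
        have hext := card_ext1 H₁ H W' δ hHH₁ hW'H hr1 hδ
        rw [hQ] at hext
        rw [← hext, Nat.card_eq_fintype_card, Fintype.card_subtype]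
      rw [hcardX, smul_eq_mul]
    rw [hrest]
    cases m with
    | zero =>
      rw [hB]
      simp [g]
    | succ m' =>
      rw [hB]
      show Q ^ ((m' + 1) * (δ + 1)) * g Q c (m' + 1) + Q ^ δ * (Q ^ (m' * δ) * g Q c m')
          = Q ^ ((m' + 1) * δ) * g Q (c + 1) (m' + 1)
      rw [show g Q (c + 1) (m' + 1) = Q ^ (m' + 1) * g Q c (m' + 1) + g Q c m' from rfl]
      ring

lemma telescope : ∀ (k : ℕ) (f : Fin (k+1) → ℕ) (v : Fin k → ℕ), f 0 = 0 →
    (∀ i : Fin k, f i.succ = f i.castSucc + v i) → f (Fin.last k) = ∑ i, v i := by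
  intro k
  induction k with
  | zero => intro f v h0 _; simpa using h0
  | succ k ih =>
    intro f v h0 hstep
    have hlast : f (Fin.last (k+1)) = f ((Fin.last k).castSucc) + v (Fin.last k) := by
      rw [← Fin.succ_last]; exact hstep (Fin.last k)
    rw [hlast, Fin.sum_univ_castSucc]
    congr 1
    exact ih (fun i => f i.castSucc) (fun i => v i.castSucc) (by simpa using h0) (fun i => by
      show f i.succ.castSucc = f i.castSucc.castSucc + v i.castSucc
      rw [← Fin.succ_castSucc]; exact hstep i.castSucc)

lemma main' (Q : ℕ) (hQ : Fintype.card F = Q) :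
    ∀ (k : ℕ) (dvec a : Fin k → ℕ) (Dfl : Fin (k+1) → Submodule F D),
    Monotone Dfl → Dfl 0 = ⊥ →
    (∀ i : Fin k, finrank F (Dfl i.succ) = finrank F (Dfl i.castSucc) + dvec i) →
    (∀ i, a i ≤ dvec i) →
    Nat.card {W : Submodule F D // W ≤ Dfl (Fin.last k) ∧ ∀ i : Fin k,
        finrank F ↥(W ⊓ Dfl i.succ) = finrank F ↥(W ⊓ Dfl i.castSucc) + a i}
      = Q ^ (∑ i, a i * ∑ j ∈ Finset.univ.filter (fun j : Fin k => (j:ℕ) < (i:ℕ)), (dvec j - a j))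
        * ∏ i, g Q (dvec i) (a i) := by
  intro k
  induction k with
  | zero =>
    intro dvec a Dfl hmono h0 hjump ha
    have h0' : Dfl (Fin.last 0) = ⊥ := by rw [show Fin.last 0 = 0 from rfl, h0]
    have huniq : Nat.card {W : Submodule F D // W ≤ Dfl (Fin.last 0) ∧ ∀ i : Fin 0,
        finrank F ↥(W ⊓ Dfl i.succ) = finrank F ↥(W ⊓ Dfl i.castSucc) + a i} = 1 := by
      rw [Nat.card_eq_one_iff_unique]
      constructor
      · constructor
        intro s t
        apply Subtype.ext
        have hs := le_bot_iff.1 (le_of_le_of_eq s.2.1 h0')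
        have ht := le_bot_iff.1 (le_of_le_of_eq t.2.1 h0')
        rw [hs, ht]
      · exact ⟨⟨⊥, by rw [h0'], fun i => i.elim0⟩⟩
    rw [huniq]
    simp
  | succ k ih =>
    intro dvec a Dfl hmono h0 hjump ha
    classical
    have hfinD := finD F D
    have hfinSub := finSub F D
    have instSub : Fintype (Submodule F D) := Fintype.ofFinite _
    set Dk : Submodule F D := Dfl ((Fin.last k).castSucc) with hDkdef
    set Etop : Submodule F D := Dfl (Fin.last (k+1)) with hEtopdef
    have hsucc_lb : Dfl (Fin.last k).succ = Etop := by rw [Fin.succ_last]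
    have hDkE : Dk ≤ Etop := hmono (Fin.le_last _)
    -- restricted data
    set Dfl' : Fin (k+1) → Submodule F D := fun i => Dfl i.castSucc with hDfl'
    have hmono' : Monotone Dfl' := fun i j hij => hmono (Fin.castSucc_le_castSucc_iff.2 hij)
    have h0'' : Dfl' 0 = ⊥ := by rw [hDfl']; simpa using h0
    have hjump' : ∀ i : Fin k, finrank F (Dfl' i.succ) = finrank F (Dfl' i.castSucc)
        + dvec i.castSucc := by
      intro i
      have := hjump i.castSucc
      rwa [Fin.succ_castSucc] at this
    -- predicates
    set P : Submodule F D → Prop := fun W => W ≤ Etop ∧ ∀ i : Fin (k+1),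
        finrank F ↥(W ⊓ Dfl i.succ) = finrank F ↥(W ⊓ Dfl i.castSucc) + a i
    set P' : Submodule F D → Prop := fun W₀ => W₀ ≤ Dk ∧ ∀ i : Fin k,
        finrank F ↥(W₀ ⊓ Dfl' i.succ) = finrank F ↥(W₀ ⊓ Dfl' i.castSucc) + a i.castSucc
    set δ : ℕ := ∑ i : Fin k, (dvec i.castSucc - a i.castSucc) with hδdef
    set CC : ℕ := Q ^ (a (Fin.last k) * δ) * g Q (dvec (Fin.last k)) (a (Fin.last k)) with hCC
    -- inf facts
    have hinf_cast : ∀ (W : Submodule F D) (j : Fin (k+1)),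
        W ⊓ Dfl j.castSucc = (W ⊓ Dk) ⊓ Dfl j.castSucc := by
      intro W j
      rw [inf_assoc, inf_of_le_right (hmono (Fin.castSucc_le_castSucc_iff.2 (Fin.le_last j)))]
    -- rank computations for W₀ with P' W₀
    have hrkDk : finrank F Dk = ∑ i : Fin k, dvec i.castSucc := by
      have := telescope k (fun i => finrank F (Dfl' i)) (fun i => dvec i.castSucc)
        (by show finrank F (Dfl' 0) = 0; rw [h0'']; exact finrank_bot F D) hjump'
      exact this
    have hrkW₀ : ∀ W₀, P' W₀ → finrank F W₀ = ∑ i : Fin k, a i.castSucc := by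
      rintro W₀ ⟨hle, hconds⟩
      have := telescope k (fun i => finrank F ↥(W₀ ⊓ Dfl' i)) (fun i => a i.castSucc)
        (by show finrank F ↥(W₀ ⊓ Dfl' 0) = 0; rw [h0'', inf_bot_eq]; exact finrank_bot F D) hconds
      calc finrank F ↥W₀ = finrank F ↥(W₀ ⊓ Dfl' (Fin.last k)) := by
            rw [show Dfl' (Fin.last k) = Dk from rfl, inf_eq_left.2 hle]
        _ = ∑ i : Fin k, a i.castSucc := this
    have hsum_split : ∑ i : Fin k, a i.castSucc + δ = ∑ i : Fin k, dvec i.castSucc := by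
      rw [hδdef, ← Finset.sum_add_distrib]
      exact Finset.sum_congr rfl (fun i _ => by have := ha i.castSucc; omega)
    -- sigma decomposition
    have hsigma : Nat.card {W : Submodule F D // P W}
        = ∑ W₀ : Submodule F D, Nat.card {W : Submodule F D // P W ∧ W ⊓ Dk = W₀} := by
      have e1 : {W : Submodule F D // P W}
          ≃ Σ W₀ : Submodule F D, {W : Submodule F D // P W ∧ W ⊓ Dk = W₀} :=
        (Equiv.sigmaFiberEquiv (fun W : {W : Submodule F D // P W} => W.1 ⊓ Dk)).symm.trans
          (Equiv.sigmaCongrRight (fun W₀ =>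
            (Equiv.subtypeSubtypeEquivSubtypeInter P (fun W => W ⊓ Dk = W₀))))
      rw [Nat.card_congr e1, Nat.card_eq_fintype_card, Fintype.card_sigma]
      exact Finset.sum_congr rfl (fun W₀ _ => (Nat.card_eq_fintype_card).symm)
    -- P' holds for W ⊓ Dk when P W
    have hPinf : ∀ W : Submodule F D, P W → ∀ W₀, W ⊓ Dk = W₀ → P' W₀ := by
      rintro W ⟨hle, hconds⟩ W₀ hinf
      subst hinf
      refine ⟨inf_le_right, fun i => ?_⟩
      have hthis := hconds i.castSucc
      have e1 : W ⊓ Dfl (i.castSucc.succ) = (W ⊓ Dk) ⊓ Dfl' i.succ := by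
        calc W ⊓ Dfl (i.castSucc.succ) = W ⊓ Dfl ((i.succ).castSucc) := by
              rw [Fin.succ_castSucc]
          _ = W ⊓ Dk ⊓ Dfl ((i.succ).castSucc) := hinf_cast W i.succ
          _ = (W ⊓ Dk) ⊓ Dfl' i.succ := rfl
      have e2 : W ⊓ Dfl (i.castSucc.castSucc) = (W ⊓ Dk) ⊓ Dfl' i.castSucc :=
        hinf_cast W i.castSucc
      rw [show Dfl' i.succ = Dfl' i.succ from rfl]
      rw [← e1, ← e2]
      exact hthis
    -- fibers
    have hval : ∀ W₀ : Submodule F D, Nat.card {W : Submodule F D // P W ∧ W ⊓ Dk = W₀}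
        = if P' W₀ then CC else 0 := by
      intro W₀
      by_cases h1 : P' W₀
      · rw [if_pos h1]
        have e2 : {W : Submodule F D // P W ∧ W ⊓ Dk = W₀}
            ≃ {W : Submodule F D // W ≤ Etop ∧ W ⊓ Dk = W₀ ∧
                finrank F W = finrank F W₀ + a (Fin.last k)} := by
          apply Equiv.subtypeEquivRight
          intro W
          constructor
          · rintro ⟨⟨hle, hconds⟩, hinf⟩
            refine ⟨hle, hinf, ?_⟩
            have := hconds (Fin.last k)
            rwa [hsucc_lb, inf_eq_left.2 hle, show Dfl (Fin.last k).castSucc = Dk from rfl, hinf] at this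
          · rintro ⟨hle, hinf, hrk⟩
            refine ⟨⟨hle, fun i => ?_⟩, hinf⟩
            refine Fin.lastCases ?_ (fun j => ?_) i
            · show finrank F ↥(W ⊓ Dfl (Fin.last k).succ)
                  = finrank F ↥(W ⊓ Dfl (Fin.last k).castSucc) + a (Fin.last k)
              rw [hsucc_lb, inf_eq_left.2 hle,
                show Dfl (Fin.last k).castSucc = Dk from rfl, hinf]
              exact hrk
            · have e1 : W ⊓ Dfl (j.castSucc.succ) = W₀ ⊓ Dfl' j.succ := by
                calc W ⊓ Dfl (j.castSucc.succ) = W ⊓ Dfl ((j.succ).castSucc) := by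
                      rw [Fin.succ_castSucc]
                  _ = W ⊓ Dk ⊓ Dfl ((j.succ).castSucc) := hinf_cast W j.succ
                  _ = W₀ ⊓ Dfl' j.succ := by rw [hinf]
              have e2 : W ⊓ Dfl (j.castSucc.castSucc) = W₀ ⊓ Dfl' j.castSucc := by
                calc W ⊓ Dfl (j.castSucc.castSucc)
                      = W ⊓ Dk ⊓ Dfl (j.castSucc.castSucc) := hinf_cast W j.castSucc
                  _ = W₀ ⊓ Dfl' j.castSucc := by rw [hinf]
              rw [e1, e2]
              exact h1.2 j
        rw [Nat.card_congr e2, hCC]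
        have hfr : finrank F Etop = finrank F Dk + dvec (Fin.last k) := by
          have := hjump (Fin.last k)
          rwa [hsucc_lb] at this
        have hfr2 : finrank F Dk = finrank F W₀ + δ := by
          rw [hrkDk, hrkW₀ W₀ h1]
          omega
        exact lemF Q hQ (dvec (Fin.last k)) Dk Etop W₀ (a (Fin.last k)) δ hDkE h1.1 hfr hfr2
      · rw [if_neg h1]
        have : IsEmpty {W : Submodule F D // P W ∧ W ⊓ Dk = W₀} := by
          constructor
          rintro ⟨W, hPW, hinf⟩
          exact h1 (hPinf W hPW W₀ hinf)
        rw [Nat.card_of_isEmpty]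
    -- sum up
    have hcount : Nat.card {W : Submodule F D // P W}
        = Nat.card {W₀ : Submodule F D // P' W₀} * CC := by
      rw [hsigma, Finset.sum_congr rfl (fun W₀ _ => hval W₀), ← Finset.sum_filter,
        Finset.sum_const, Nat.card_eq_fintype_card, Fintype.card_subtype, smul_eq_mul]
    have hIH := ih (fun i => dvec i.castSucc) (fun i => a i.castSucc) Dfl' hmono' h0'' hjump'
      (fun i => ha i.castSucc)
    rw [show Dfl' (Fin.last k) = Dk from rfl] at hIH
    have hcount2 : Nat.card {W₀ : Submodule F D // P' W₀}
        = Q ^ (∑ i : Fin k, a i.castSucc * ∑ j ∈ Finset.univ.filter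
            (fun j : Fin k => (j:ℕ) < (i:ℕ)), (dvec j.castSucc - a j.castSucc))
          * ∏ i : Fin k, g Q (dvec i.castSucc) (a i.castSucc) := hIH
    rw [hcount, hcount2, hCC]
    -- final arithmetic on sums over Fin (k+1)
    have hS : ∀ i : Fin (k+1), (∑ j ∈ Finset.univ.filter
        (fun j : Fin (k+1) => (j:ℕ) < (i:ℕ)), (dvec j - a j))
        = (if i = Fin.last k then δ else ∑ j ∈ Finset.univ.filter
            (fun j : Fin k => (j:ℕ) < (i:ℕ)), (dvec j.castSucc - a j.castSucc)) := by
      intro i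
      rw [Finset.sum_filter, Fin.sum_univ_castSucc]
      by_cases hi : i = Fin.last k
      · subst hi
        rw [if_pos rfl, hδdef]
        have h1 : (if ((Fin.last k : Fin (k+1)) : ℕ) < ((Fin.last k : Fin (k+1)) : ℕ)
            then dvec (Fin.last k) - a (Fin.last k) else 0) = 0 := by simp
        rw [h1, Nat.add_zero]
        apply Finset.sum_congr rfl
        intro j _
        rw [if_pos (by simpa using j.isLt)]
      · rw [if_neg hi]
        have h1 : (if ((Fin.last k : Fin (k+1)) : ℕ) < (i : ℕ)
            then dvec (Fin.last k) - a (Fin.last k) else 0) = 0 := by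
          have hik : (i:ℕ) < k + 1 := i.isLt
          rw [if_neg]
          simp only [Fin.val_last]
          omega
        rw [h1, Nat.add_zero, Finset.sum_filter]
        apply Finset.sum_congr rfl
        intro j _
        rfl
    have hcast : ∀ j : Fin k, (j.castSucc ≠ Fin.last k) := fun j => (Fin.castSucc_lt_last j).ne
    have hgoal : (∑ i : Fin (k+1), a i * ∑ j ∈ Finset.univ.filter
          (fun j : Fin (k+1) => (j:ℕ) < (i:ℕ)), (dvec j - a j))
        = (∑ i : Fin k, a i.castSucc * ∑ j ∈ Finset.univ.filter
            (fun j : Fin k => (j:ℕ) < (i:ℕ)), (dvec j.castSucc - a j.castSucc))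
          + a (Fin.last k) * δ := by
      rw [Fin.sum_univ_castSucc]
      congr 1
      · apply Finset.sum_congr rfl
        intro j _
        congr 1
        rw [hS j.castSucc, if_neg (hcast j)]
        apply Finset.sum_congr _ (fun _ _ => rfl)
        apply Finset.filter_congr
        intro t _
        simp [Fin.coe_castSucc]
      · congr 1
        rw [hS (Fin.last k), if_pos rfl]
    rw [hgoal, pow_add]
    rw [Fin.prod_univ_castSucc (f := fun i : Fin (k+1) => g Q (dvec i) (a i))]
    ring
end Stmt11

/-- Let `D` be a `d`-dimensional vector space over a finite field with `Q` elements,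
with a partial flag `0 = D₀ ⊂ D₁ ⊂ ⋯ ⊂ D_k = D`, `dim(D_i/D_{i-1}) = d_i`
(so `d = d₁ + ⋯ + d_k`).  Given `a` with `0 ≤ a_i ≤ d_i`, the number of subspaces
`W ⊆ D` with `dim(W ∩ D_i)/(W ∩ D_{i-1}) = a_i` for all `i` equals
`∑_{b ∈ C_a} Q^{∑_{(j,t) < (i,s)} b_{i,s}(1 - b_{j,t})}`, where `C_a` is the set of
0-1 vectors of length `d` (indexed here by pairs `(i, s)` with `i` a block and `s` a
position in block `i`, ordered lexicographically) whose sum over block `j` is `a_j`. -/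
theorem stmt_11 (F : Type*) [Field F] [Fintype F] (Q : ℕ) (hQ : Fintype.card F = Q)
    (k d : ℕ) (dvec : Fin k → ℕ) (hd : ∑ i, dvec i = d)
    (D : Type*) [AddCommGroup D] [Module F D] [FiniteDimensional F D]
    (hD : Module.finrank F D = d)
    (Dfl : Fin (k + 1) → Submodule F D) (hmono : Monotone Dfl)
    (h0 : Dfl 0 = ⊥) (htop : Dfl (Fin.last k) = ⊤)
    (hjump : ∀ i : Fin k,
      Module.finrank F (Dfl i.succ) = Module.finrank F (Dfl i.castSucc) + dvec i)
    (a : Fin k → ℕ) (ha : ∀ i, a i ≤ dvec i) :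
    Nat.card {W : Submodule F D // ∀ i : Fin k,
        Module.finrank F ↥(W ⊓ Dfl i.succ) = Module.finrank F ↥(W ⊓ Dfl i.castSucc) + a i} =
      ∑ b ∈ Finset.univ.filter (fun b : ∀ i : Fin k, Fin (dvec i) → Bool =>
          ∀ i, (Finset.univ.filter (fun s => b i s = true)).card = a i),
        Q ^ (∑ i : Fin k, ∑ s : Fin (dvec i), ∑ j : Fin k, ∑ t : Fin (dvec j),
          if ((j : ℕ) < (i : ℕ) ∨ ((j : ℕ) = (i : ℕ) ∧ (t : ℕ) < (s : ℕ))) then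
            (if b i s then 1 else 0) * (if b j t then 0 else 1) else 0) := by
  have e : {W : Submodule F D // ∀ i : Fin k,
        Module.finrank F ↥(W ⊓ Dfl i.succ) = Module.finrank F ↥(W ⊓ Dfl i.castSucc) + a i}
      ≃ {W : Submodule F D // W ≤ Dfl (Fin.last k) ∧ ∀ i : Fin k,
        Module.finrank F ↥(W ⊓ Dfl i.succ) = Module.finrank F ↥(W ⊓ Dfl i.castSucc) + a i} :=
    Equiv.subtypeEquivRight (fun W => ⟨fun h => ⟨by rw [htop]; exact le_top, h⟩, fun h => h.2⟩)
  rw [Nat.card_congr e, Stmt11.main' Q hQ k dvec a Dfl hmono h0 hjump ha]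
  exact (Stmt11.rhs_eq Q k dvec a).symm
end

section
/- Let D be a d-dimensional vector space over a field, with a partial flag D_0 = 0 ⊂ D_1 ⊂ ⋯ ⊂ D_k = D, and let W ⊆ D be a subspace. The set F_1 = {t ∈ End D : t(D_i) ⊆ D_{i−1} for all i, im t ⊆ W ⊆ ker t} is a linear subspace of End D of dimension ∑_{i<j} w_i (d_j − w_j), where w_i = dim(W∩D_i) − dim(W∩D_{i−1}) and d_j = dim D_j − dim D_{j−1}. -/
open Module DirectSum

lemma stmt19_relcompl {K : Type*} [Field K] {D : Type*} [AddCommGroup D] [Module K D]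
    [FiniteDimensional K D] (p X : Submodule K D) (hXp : X ≤ p) :
    ∃ U : Submodule K D, U ≤ p ∧ X ⊓ U = ⊥ ∧ X ⊔ U = p ∧
      Module.finrank K X + Module.finrank K U = Module.finrank K p := by
  obtain ⟨q, hq⟩ := Submodule.exists_isCompl (Submodule.comap p.subtype X)
  have hinj : Function.Injective p.subtype := Subtype.val_injective
  have hmc : Submodule.map p.subtype (Submodule.comap p.subtype X) = X := by
    rw [Submodule.map_comap_subtype, inf_eq_right.mpr hXp]
  refine ⟨q.map p.subtype, Submodule.map_subtype_le p q, ?_, ?_, ?_⟩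
  · rw [← hmc, ← Submodule.map_inf _ hinj, hq.inf_eq_bot, Submodule.map_bot]
  · rw [← hmc, ← Submodule.map_sup, hq.sup_eq_top, Submodule.map_subtype_top]
  · rw [← hmc, Submodule.finrank_map_subtype_eq, Submodule.finrank_map_subtype_eq]
    exact Submodule.finrank_add_eq_of_isCompl hq

/-- Let `D` be a `d`-dimensional vector space with a partial flag
`0 = D₀ ⊆ D₁ ⊆ ⋯ ⊆ D_k = D` and `W ⊆ D` a subspace.  The set
`F₁ = {t ∈ End D : t(D_i) ⊆ D_{i-1} for all i, im t ⊆ W ⊆ ker t}` is a linear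
subspace of `End D` of dimension `∑_{i<j} w_i (d_j - w_j)`, where
`w_i = dim(W ∩ D_i) - dim(W ∩ D_{i-1})` and `d_j = dim D_j - dim D_{j-1}`. -/
theorem stmt_19 (K : Type*) [Field K] (D : Type*) [AddCommGroup D] [Module K D]
    [FiniteDimensional K D] (k d : ℕ) (hD : Module.finrank K D = d)
    (Dfl : Fin (k + 1) → Submodule K D) (hmono : Monotone Dfl)
    (h0 : Dfl 0 = ⊥) (htop : Dfl (Fin.last k) = ⊤)
    (W : Submodule K D)
    (dvec wvec : Fin k → ℕ)
    (hdvec : ∀ i : Fin k,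
      Module.finrank K (Dfl i.succ) = Module.finrank K (Dfl i.castSucc) + dvec i)
    (hwvec : ∀ i : Fin k,
      Module.finrank K ↥(W ⊓ Dfl i.succ) = Module.finrank K ↥(W ⊓ Dfl i.castSucc) + wvec i) :
    ∃ S : Submodule K (Module.End K D),
      (∀ t : Module.End K D, t ∈ S ↔
        (∀ i : Fin k, (Dfl i.succ).map t ≤ Dfl i.castSucc) ∧
          LinearMap.range t ≤ W ∧ W ≤ LinearMap.ker t) ∧
      Module.finrank K S =
        ∑ i : Fin k, ∑ j : Fin k, if i < j then wvec i * (dvec j - wvec j) else 0 := by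
  classical
  -- the submodule S
  set S : Submodule K (Module.End K D) :=
    { carrier := {t | (∀ i : Fin k, ∀ x ∈ Dfl i.succ, t x ∈ Dfl i.castSucc) ∧
        (∀ x, t x ∈ W) ∧ (∀ x ∈ W, t x = 0)}
      add_mem' := by
        rintro t s ⟨ht1, ht2, ht3⟩ ⟨hs1, hs2, hs3⟩
        refine ⟨fun i x hx => ?_, fun x => ?_, fun x hx => ?_⟩
        · exact Submodule.add_mem _ (ht1 i x hx) (hs1 i x hx)
        · exact Submodule.add_mem _ (ht2 x) (hs2 x)
        · simp [LinearMap.add_apply, ht3 x hx, hs3 x hx]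
      zero_mem' := by
        refine ⟨fun i x hx => ?_, fun x => ?_, fun x hx => rfl⟩ <;> simp
      smul_mem' := by
        rintro c t ⟨ht1, ht2, ht3⟩
        refine ⟨fun i x hx => ?_, fun x => ?_, fun x hx => ?_⟩
        · exact Submodule.smul_mem _ _ (ht1 i x hx)
        · exact Submodule.smul_mem _ _ (ht2 x)
        · simp [LinearMap.smul_apply, ht3 x hx] } with hS
  have hmemS : ∀ t : Module.End K D, t ∈ S ↔
      (∀ i : Fin k, ∀ x ∈ Dfl i.succ, t x ∈ Dfl i.castSucc) ∧
        (∀ x, t x ∈ W) ∧ (∀ x ∈ W, t x = 0) := fun t => Iff.rfl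
  refine ⟨S, ?_, ?_⟩
  · intro t
    rw [hmemS]
    constructor
    · rintro ⟨h1, h2, h3⟩
      refine ⟨fun i => ?_, ?_, ?_⟩
      · rintro _ ⟨x, hx, rfl⟩; exact h1 i x hx
      · rintro _ ⟨x, rfl⟩; exact h2 x
      · intro x hx; exact LinearMap.mem_ker.mpr (h3 x hx)
    · rintro ⟨h1, h2, h3⟩
      refine ⟨fun i x hx => h1 i ⟨x, hx, rfl⟩, fun x => h2 ⟨x, rfl⟩,
        fun x hx => LinearMap.mem_ker.mp (h3 hx)⟩
  -- now the dimension count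
  have hcs : ∀ j : Fin k, Dfl j.castSucc ≤ Dfl j.succ := fun j => hmono j.castSucc_le_succ
  -- choose relative complements U j of Dfl j.castSucc ⊔ (W ⊓ Dfl j.succ) in Dfl j.succ
  have hex : ∀ j : Fin k, ∃ U : Submodule K D,
      U ≤ Dfl j.succ ∧ (Dfl j.castSucc ⊔ (W ⊓ Dfl j.succ)) ⊓ U = ⊥ ∧
      (Dfl j.castSucc ⊔ (W ⊓ Dfl j.succ)) ⊔ U = Dfl j.succ ∧
      Module.finrank K ↥(Dfl j.castSucc ⊔ (W ⊓ Dfl j.succ)) + Module.finrank K U =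
        Module.finrank K (Dfl j.succ) :=
    fun j => stmt19_relcompl _ _ (sup_le (hcs j) inf_le_right)
  choose U hUle hUinf hUsup hUrank using hex
  -- dimension of the intermediate space
  have hXrank : ∀ j : Fin k,
      Module.finrank K ↥(Dfl j.castSucc ⊔ (W ⊓ Dfl j.succ)) =
        Module.finrank K (Dfl j.castSucc) + wvec j := by
    intro j
    have h1 := Submodule.finrank_sup_add_finrank_inf_eq (Dfl j.castSucc) (W ⊓ Dfl j.succ)
    have h2 : Dfl j.castSucc ⊓ (W ⊓ Dfl j.succ) = W ⊓ Dfl j.castSucc := by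
      rw [inf_left_comm, inf_eq_left.mpr (hcs j), inf_comm]
    rw [h2, hwvec j] at h1
    omega
  have hurank : ∀ j : Fin k, Module.finrank K (U j) + wvec j = dvec j := by
    intro j
    have h1 := hUrank j
    rw [hXrank j, hdvec j] at h1
    omega
  -- telescoping for W ⊓ Dfl
  have hB : ∀ m : Fin (k + 1), Module.finrank K ↥(W ⊓ Dfl m) =
      ∑ i : Fin k, if (i : ℕ) < (m : ℕ) then wvec i else 0 := by
    intro m
    induction m using Fin.induction with
    | zero => simp [h0]
    | succ i ih =>
        have hsplit : ∀ i' : Fin k,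
            (if (i' : ℕ) < ((i.succ : Fin (k+1)) : ℕ) then wvec i' else 0) =
            (if (i' : ℕ) < ((i.castSucc : Fin (k+1)) : ℕ) then wvec i' else 0) +
            (if i' = i then wvec i' else 0) := by
          intro i'
          simp only [Fin.val_succ, Fin.coe_castSucc, Fin.ext_iff]
          split_ifs <;> omega
        rw [hwvec i, ih, Finset.sum_congr rfl fun i' _ => hsplit i',
          Finset.sum_add_distrib, Finset.sum_ite_eq' Finset.univ i wvec]
        simp
  -- telescoping for Dfl
  have hDtel : ∀ m : Fin (k + 1), Module.finrank K (Dfl m) =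
      ∑ i : Fin k, if (i : ℕ) < (m : ℕ) then dvec i else 0 := by
    intro m
    induction m using Fin.induction with
    | zero => simp [h0]
    | succ i ih =>
        have hsplit : ∀ i' : Fin k,
            (if (i' : ℕ) < ((i.succ : Fin (k+1)) : ℕ) then dvec i' else 0) =
            (if (i' : ℕ) < ((i.castSucc : Fin (k+1)) : ℕ) then dvec i' else 0) +
            (if i' = i then dvec i' else 0) := by
          intro i'
          simp only [Fin.val_succ, Fin.coe_castSucc, Fin.ext_iff]
          split_ifs <;> omega
        rw [hdvec i, ih, Finset.sum_congr rfl fun i' _ => hsplit i',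
          Finset.sum_add_distrib, Finset.sum_ite_eq' Finset.univ i dvec]
        simp
  have hWrank : Module.finrank K W = ∑ i : Fin k, wvec i := by
    have h1 : W ⊓ Dfl (Fin.last k) = W := by rw [htop, inf_top_eq]
    have h2 := hB (Fin.last k)
    rw [h1] at h2
    rw [h2]
    exact Finset.sum_congr rfl fun i _ => by simp [i.isLt]
  -- the pieces of the internal direct sum decomposition
  set C : Fin (k + 1) → Submodule K D := fun m => Fin.cases W U m with hC
  have hC0 : C 0 = W := rfl
  have hCsucc : ∀ j : Fin k, C j.succ = U j := fun j => by simp [hC]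
  -- the flag is spanned by the lower pieces
  have hspan : ∀ m : Fin (k + 1), Dfl m ≤ ⨆ j, ⨆ (_ : j ≤ m), C j := by
    intro m
    induction m using Fin.induction with
    | zero => rw [h0]; exact bot_le
    | succ i ih =>
        rw [← hUsup i]
        refine sup_le (sup_le ?_ ?_) ?_
        · exact le_trans ih (biSup_mono fun j hj => le_trans hj i.castSucc_le_succ)
        · exact le_trans inf_le_left
            (le_iSup₂ (f := fun (j : Fin (k+1)) (_ : j ≤ i.succ) => C j) 0 (Fin.zero_le _))
        · rw [← hCsucc i]
          exact le_iSup₂ (f := fun (j : Fin (k+1)) (_ : j ≤ i.succ) => C j) i.succ le_rfl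
  have hCsup : ⨆ j, C j = ⊤ := by
    refine top_unique ?_
    calc (⊤ : Submodule K D) = Dfl (Fin.last k) := htop.symm
      _ ≤ ⨆ j, ⨆ (_ : j ≤ Fin.last k), C j := hspan _
      _ ≤ ⨆ j, C j := iSup₂_le fun j _ => le_iSup C j
  -- dimension count gives internality
  haveI : FiniteDimensional K (⨁ j, ↥(C j)) :=
    Module.Finite.equiv (DirectSum.linearEquivFunOnFintype K (Fin (k+1)) (fun j => ↥(C j))).symm
  have hdsrank : Module.finrank K (⨁ j, ↥(C j)) = Module.finrank K D := by
    rw [(DirectSum.linearEquivFunOnFintype K (Fin (k+1)) (fun j => ↥(C j))).finrank_eq,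
      Module.finrank_pi_fintype, Fin.sum_univ_succ]
    have h1 : Module.finrank K ↥(C 0) = ∑ i : Fin k, wvec i := by rw [hC0, hWrank]
    have h2 : ∀ j : Fin k, Module.finrank K ↥(C j.succ) = Module.finrank K (U j) :=
      fun j => by rw [hCsucc j]
    rw [h1, Finset.sum_congr rfl fun j _ => h2 j]
    have h3 : Module.finrank K D = ∑ i : Fin k, dvec i := by
      rw [← finrank_top K D, ← htop, hDtel]
      exact Finset.sum_congr rfl fun i _ => by simp [i.isLt]
    rw [h3, ← Finset.sum_add_distrib]
    exact Finset.sum_congr rfl fun j _ => by have := hurank j; omega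
  have hsurj : Function.Surjective (DirectSum.coeLinearMap C) := by
    rw [← LinearMap.range_eq_top, DirectSum.range_coeLinearMap, hCsup]
  have hinternal : DirectSum.IsInternal C :=
    ⟨(LinearMap.injective_iff_surjective_of_finrank_eq_finrank hdsrank).mpr hsurj, hsurj⟩
  set e : (⨁ j, ↥(C j)) ≃ₗ[K] D :=
    LinearEquiv.ofBijective (DirectSum.coeLinearMap C) hinternal with he
  -- the projections
  set π : ∀ m : Fin (k + 1), D →ₗ[K] ↥(C m) := fun m =>
    { toFun := fun x => e.symm x m
      map_add' := fun x y => by simp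
      map_smul' := fun c x => by simp; rfl } with hπ
  have hπ_same : ∀ (m : Fin (k+1)) (x : D) (hx : x ∈ C m), π m x = ⟨x, hx⟩ :=
    fun m x hx => hinternal.ofBijective_coeLinearMap_of_mem hx
  have hπ_ne : ∀ {m m' : Fin (k+1)}, m ≠ m' → ∀ (x : D), x ∈ C m → π m' x = 0 :=
    fun hne x hx => hinternal.ofBijective_coeLinearMap_of_mem_ne hne hx
  have hπ_sum : ∀ x : D, ∑ m, ((π m x : D)) = x := by
    intro x
    have h1 := DirectSum.sum_univ_of (e.symm x)
    have h2 := congrArg e.toLinearMap h1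
    rw [map_sum] at h2
    have h3 : ∀ m : Fin (k+1),
        e.toLinearMap (DirectSum.of (fun j => ↥(C j)) m (e.symm x m)) = ((π m x : D)) := by
      intro m
      show e (DirectSum.of (fun j => ↥(C j)) m (e.symm x m)) = _
      show DirectSum.coeLinearMap C (DirectSum.of (fun j => ↥(C j)) m (e.symm x m)) = _
      rw [DirectSum.coeLinearMap_of]
      rfl
    rw [Finset.sum_congr rfl fun m _ => h3 m] at h2
    simpa using h2
  -- vanishing of high projections on the flag
  have hπ_flag : ∀ (i : Fin k) (x : D), x ∈ Dfl i.succ →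
      ∀ m : Fin (k+1), ¬(m ≤ (i.succ : Fin (k+1))) → π m x = 0 := by
    intro i x hx m hm
    have h1 : Dfl i.succ ≤ LinearMap.ker (π m) := by
      refine le_trans (hspan i.succ) (iSup₂_le fun j hj => ?_)
      intro y hy
      exact LinearMap.mem_ker.mpr (hπ_ne (fun hjm => hm (by rw [← hjm]; exact hj)) y hy)
    exact LinearMap.mem_ker.mp (h1 hx)
  -- the maps `ρ j : D → U j`
  set ρ : ∀ j : Fin k, D →ₗ[K] ↥(U j) := fun j =>
    (LinearEquiv.ofEq _ _ (hCsucc j)).toLinearMap ∘ₗ π j.succ with hρ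
  have hρ_coe : ∀ (j : Fin k) (x : D), ((ρ j x : D)) = ((π j.succ x : D)) := fun j x => rfl
  have hρ_mem : ∀ (j : Fin k) (u : D) (hu : u ∈ U j), ρ j u = ⟨u, hu⟩ := by
    intro j u hu
    apply Subtype.ext
    rw [hρ_coe, hπ_same j.succ u (by rw [hCsucc j]; exact hu)]
  have hρ_ne : ∀ (j j' : Fin k), j ≠ j' → ∀ u ∈ U j, ρ j' u = 0 := by
    intro j j' hne u hu
    have h1 : π j'.succ u = 0 :=
      hπ_ne (fun h => hne (Fin.succ_injective _ h)) u (by rw [hCsucc j]; exact hu)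
    apply Subtype.ext
    rw [hρ_coe, h1]
    simp
  have hρ_W : ∀ (j : Fin k) (u : D), u ∈ W → ρ j u = 0 := by
    intro j u hu
    have h1 : π j.succ u = 0 :=
      hπ_ne (m := 0) (Ne.symm (Fin.succ_ne_zero j)) u (by rw [hC0]; exact hu)
    apply Subtype.ext
    rw [hρ_coe, h1]
    simp
  have hρ_flag : ∀ (i : Fin k) (x : D), x ∈ Dfl i.succ → ∀ j : Fin k, ¬(j ≤ i) → ρ j x = 0 := by
    intro i x hx j hj
    have h1 : π j.succ x = 0 :=
      hπ_flag i x hx j.succ (fun h => hj (Fin.succ_le_succ_iff.mp h))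
    apply Subtype.ext
    rw [hρ_coe, h1]
    simp
  -- the target spaces
  set Bsub : Fin k → Submodule K D := fun j => W ⊓ Dfl j.castSucc with hBsub
  -- the raw reconstruction map
  set Ψraw : (∀ j : Fin k, (↥(U j) →ₗ[K] ↥(Bsub j))) → Module.End K D := fun f =>
    ∑ j : Fin k, (Bsub j).subtype ∘ₗ (f j) ∘ₗ (ρ j) with hΨraw
  have hΨraw_apply : ∀ f x, Ψraw f x = ∑ j : Fin k, ((f j (ρ j x) : D)) := by
    intro f x
    rw [hΨraw]
    simp [LinearMap.sum_apply]
  have hΨmem : ∀ f, Ψraw f ∈ S := by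
    intro f
    rw [hmemS]
    refine ⟨?_, ?_, ?_⟩
    · intro i x hx
      rw [hΨraw_apply]
      refine Submodule.sum_mem _ fun j _ => ?_
      by_cases hj : j ≤ i
      · have h1 : ((f j (ρ j x) : D)) ∈ Bsub j := (f j (ρ j x)).2
        exact hmono (Fin.castSucc_le_castSucc_iff.mpr hj) (Submodule.mem_inf.mp h1).2
      · rw [hρ_flag i x hx j hj, map_zero]
        simpa using Submodule.zero_mem (Dfl i.castSucc)
    · intro x
      rw [hΨraw_apply]
      exact Submodule.sum_mem _ fun j _ => (Submodule.mem_inf.mp (f j (ρ j x)).2).1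
    · intro x hx
      rw [hΨraw_apply]
      refine Finset.sum_eq_zero fun j _ => ?_
      rw [hρ_W j x hx, map_zero]
      rfl
  -- the two linear maps
  set Ψ : (∀ j : Fin k, (↥(U j) →ₗ[K] ↥(Bsub j))) →ₗ[K] ↥S :=
    { toFun := fun f => ⟨Ψraw f, hΨmem f⟩
      map_add' := fun f g => Subtype.ext (LinearMap.ext fun x => by
        simp [hΨraw_apply, Finset.sum_add_distrib])
      map_smul' := fun c f => Subtype.ext (LinearMap.ext fun x => by
        simp [hΨraw_apply, Finset.smul_sum]) } with hΨ
  have hUmem : ∀ (t : ↥S) (j : Fin k) (u : ↥(U j)), (t : Module.End K D) u ∈ Bsub j := by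
    intro t j u
    obtain ⟨h1, h2, h3⟩ := (hmemS _).mp t.2
    exact Submodule.mem_inf.mpr ⟨h2 u, h1 j u (hUle j u.2)⟩
  set Φ : ↥S →ₗ[K] (∀ j : Fin k, (↥(U j) →ₗ[K] ↥(Bsub j))) :=
    { toFun := fun t j => LinearMap.codRestrict (Bsub j)
        (((t : Module.End K D)).domRestrict (U j)) (fun u => hUmem t j u)
      map_add' := fun t s => by
        funext j
        apply LinearMap.ext; intro u
        apply Subtype.ext
        rfl
      map_smul' := fun c t => by
        funext j
        apply LinearMap.ext; intro u
        apply Subtype.ext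
        rfl } with hΦ
  -- the inverse identities
  have hΦΨ : ∀ f, Φ (Ψ f) = f := by
    intro f
    funext j
    apply LinearMap.ext; intro u
    apply Subtype.ext
    show Ψraw f ↑u = ↑(f j u)
    rw [hΨraw_apply, Finset.sum_eq_single j]
    · rw [hρ_mem j ↑u u.2]
    · intro b _ hb
      rw [hρ_ne j b (Ne.symm hb) ↑u u.2, map_zero]
      rfl
    · intro h
      exact absurd (Finset.mem_univ j) h
  have hΨΦ : ∀ t : ↥S, Ψ (Φ t) = t := by
    intro t
    apply Subtype.ext
    apply LinearMap.ext; intro x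
    show Ψraw (Φ t) x = (t : Module.End K D) x
    rw [hΨraw_apply]
    have h1 : ∀ j : Fin k, ((Φ t j (ρ j x) : D)) = (t : Module.End K D) ↑(π j.succ x) := by
      intro j
      rfl
    rw [Finset.sum_congr rfl fun j _ => h1 j]
    obtain ⟨h1', h2', h3'⟩ := (hmemS _).mp t.2
    have h0t : (t : Module.End K D) ↑(π 0 x) = 0 :=
      h3' _ (π 0 x).2
    have h2 : (t : Module.End K D) x = ∑ m : Fin (k+1), (t : Module.End K D) ↑(π m x) := by
      conv_lhs => rw [← hπ_sum x]
      exact map_sum _ _ _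
    rw [h2, Fin.sum_univ_succ, h0t, zero_add]
  -- finrank computation
  have equivS : ↥S ≃ₗ[K] ∀ j : Fin k, (↥(U j) →ₗ[K] ↥(Bsub j)) :=
    LinearEquiv.ofLinear Φ Ψ (LinearMap.ext fun f => hΦΨ f) (LinearMap.ext fun t => hΨΦ t)
  rw [equivS.finrank_eq, Module.finrank_pi_fintype]
  have hlin : ∀ j : Fin k, Module.finrank K (↥(U j) →ₗ[K] ↥(Bsub j)) =
      Module.finrank K (U j) * Module.finrank K (Bsub j) := fun j =>
    Module.finrank_linearMap K K ↥(U j) ↥(Bsub j)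
  rw [Finset.sum_congr rfl fun j _ => hlin j]
  have harith : ∀ j : Fin k, Module.finrank K (U j) * Module.finrank K (Bsub j) =
      ∑ i : Fin k, if i < j then wvec i * (dvec j - wvec j) else 0 := by
    intro j
    have hBj : Module.finrank K (Bsub j) =
        ∑ i : Fin k, if (i : ℕ) < ((j.castSucc : Fin (k+1)) : ℕ) then wvec i else 0 :=
      hB j.castSucc
    rw [hBj, Finset.mul_sum]
    refine Finset.sum_congr rfl fun i _ => ?_
    by_cases hij : i < j
    · rw [if_pos (show (i : ℕ) < ((j.castSucc : Fin (k+1)) : ℕ) from hij), if_pos hij]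
      have hu : Module.finrank K (U j) = dvec j - wvec j := by
        have := hurank j; omega
      rw [hu, mul_comm]
    · rw [mul_ite, mul_zero, if_neg (show ¬(i : ℕ) < ((j.castSucc : Fin (k+1)) : ℕ) from hij), if_neg hij]
  rw [Finset.sum_congr rfl fun j _ => harith j, Finset.sum_comm]
end
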